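/- Let G be a finite group with subgroups G₁, G₂, G₃, G₄. If the set products satisfy G₁G₂ = G₂G₁ (equivalently, the set G₁G₂ = {xy : x ∈ G₁, y ∈ G₂} is a subgroup of G), then the Ingleton inequality holds: |G₁|·|G₂|·|G₃₄|·|G₁₂₃|·|G₁₂₄| ≥ |G₁₂|·|G₁₃|·|G₁₄|·|G₂₃|·|G₂₄|. -/

import Mathlib

open scoped Pointwise

lemma card_image_quotient {G : Type*} [Group G] (A B : Subgroup G) :
    Nat.card ((A : Set G).image ((↑) : G → G ⧸ B)) = B.relIndex A := by
  set f : (A ⧸ B.subgroupOf A) → ((A : Set G).image ((↑) : G → G ⧸ B)) := fun q =>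
    Quotient.liftOn' q (fun a => ⟨((a : G) : G ⧸ B), ⟨a, a.2, rfl⟩⟩)
      (fun a b hab => Subtype.ext (by
        rw [QuotientGroup.leftRel_apply, Subgroup.mem_subgroupOf] at hab
        exact (QuotientGroup.eq).mpr (by simpa using hab))) with hf
  have hbij : Function.Bijective f := by
    constructor
    · intro q₁ q₂ hq
      induction q₁ using Quotient.inductionOn'
      induction q₂ using Quotient.inductionOn'
      rename_i a b
      apply Quotient.sound'
      rw [QuotientGroup.leftRel_apply, Subgroup.mem_subgroupOf]
      have : ((a : G) : G ⧸ B) = ((b : G) : G ⧸ B) := by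
        simpa [hf] using congrArg Subtype.val hq
      simpa using (QuotientGroup.eq).mp this
    · rintro ⟨x, a, ha, rfl⟩
      exact ⟨Quotient.mk'' ⟨a, ha⟩, by simp [hf]⟩
  rw [Subgroup.relIndex, Subgroup.index, ← Nat.card_congr (Equiv.ofBijective f hbij)]

lemma card_mul_inf {G : Type*} [Group G] (A B : Subgroup G) :
    Nat.card ((A : Set G) * (B : Set G)) * Nat.card (A ⊓ B : Subgroup G)
      = Nat.card A * Nat.card B := by
  rw [Subgroup.card_mul_eq_card_subgroup_mul_card_quotient B (A : Set G),
    card_image_quotient]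
  have h1 : Nat.card (A ⊓ B : Subgroup G) * B.relIndex A = Nat.card A := by
    rw [Subgroup.relIndex, ← Subgroup.card_mul_index (B.subgroupOf A)]
    congr 1
    rw [← Subgroup.inf_subgroupOf_right B A]
    rw [inf_comm A B]
    exact (Nat.card_congr (Subgroup.subgroupOfEquivOfLe inf_le_right).toEquiv).symm
  rw [mul_assoc, mul_comm (B.relIndex A), h1, mul_comm]

/-- If the set product of `G₁` and `G₂` commutes (equivalently, `G₁G₂` is a subgroup),
then the Ingleton inequality holds for `(G₁, G₂, G₃, G₄)`. -/
theorem stmt2 (G : Type*) [Group G] [Finite G] (G₁ G₂ G₃ G₄ : Subgroup G)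
    (h : (G₁ : Set G) * (G₂ : Set G) = (G₂ : Set G) * (G₁ : Set G)) :
    Nat.card G₁ * Nat.card G₂ * Nat.card (G₃ ⊓ G₄ : Subgroup G) *
        Nat.card (G₁ ⊓ G₂ ⊓ G₃ : Subgroup G) * Nat.card (G₁ ⊓ G₂ ⊓ G₄ : Subgroup G) ≥
      Nat.card (G₁ ⊓ G₂ : Subgroup G) * Nat.card (G₁ ⊓ G₃ : Subgroup G) *
        Nat.card (G₁ ⊓ G₄ : Subgroup G) * Nat.card (G₂ ⊓ G₃ : Subgroup G) *
        Nat.card (G₂ ⊓ G₄ : Subgroup G) := by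
  -- the subgroup `K` with carrier `G₁G₂`
  set K : Subgroup G :=
    { carrier := (G₁ : Set G) * (G₂ : Set G)
      one_mem' := ⟨1, one_mem _, 1, one_mem _, one_mul 1⟩
      mul_mem' := by
        rintro x y ⟨a, ha, b, hb, rfl⟩ ⟨a', ha', b', hb', rfl⟩
        have : b * a' ∈ (G₁ : Set G) * (G₂ : Set G) := by
          rw [h]; exact Set.mul_mem_mul hb ha'
        obtain ⟨a₂, ha₂, b₂, hb₂, hab⟩ := this
        refine ⟨a * a₂, mul_mem ha ha₂, b₂ * b', mul_mem hb₂ hb', ?_⟩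
        calc a * a₂ * (b₂ * b') = a * (a₂ * b₂) * b' := by group
          _ = a * (b * a') * b' := by rw [show a₂ * b₂ = b * a' from hab]
          _ = a * b * (a' * b') := by group
      inv_mem' := by
        rintro x ⟨a, ha, b, hb, rfl⟩
        have : b⁻¹ * a⁻¹ ∈ (G₂ : Set G) * (G₁ : Set G) := Set.mul_mem_mul (inv_mem hb) (inv_mem ha)
        rw [← h] at this
        simpa [mul_inv_rev] using this } with hKdef
  have hKcoe : (K : Set G) = (G₁ : Set G) * (G₂ : Set G) := rfl
  set a1 := Nat.card G₁
  set a2 := Nat.card G₂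
  set d := Nat.card (G₃ ⊓ G₄ : Subgroup G)
  set p := Nat.card (G₁ ⊓ G₂ ⊓ G₃ : Subgroup G)
  set q := Nat.card (G₁ ⊓ G₂ ⊓ G₄ : Subgroup G)
  set r := Nat.card (G₁ ⊓ G₂ : Subgroup G)
  set s := Nat.card (G₁ ⊓ G₃ : Subgroup G)
  set t := Nat.card (G₁ ⊓ G₄ : Subgroup G)
  set u := Nat.card (G₂ ⊓ G₃ : Subgroup G)
  set v := Nat.card (G₂ ⊓ G₄ : Subgroup G)
  set k := Nat.card K
  set m := Nat.card (K ⊓ G₃ : Subgroup G)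
  set n := Nat.card (K ⊓ G₄ : Subgroup G)
  -- F4 : k * r = a1 * a2
  have F4 : k * r = a1 * a2 := by
    have := card_mul_inf G₁ G₂
    rwa [← hKcoe] at this
  -- generic fact: for subgroups A B C with the product set inside ↑C,
  -- card A * card B ≤ card C * card (A ⊓ B)
  have key : ∀ A B C : Subgroup G, ((A : Set G) * (B : Set G) ⊆ (C : Set G)) →
      Nat.card A * Nat.card B ≤ Nat.card C * Nat.card (A ⊓ B : Subgroup G) := by
    intro A B C hsub
    rw [← card_mul_inf A B]
    exact Nat.mul_le_mul_right _ (Nat.card_mono (Set.toFinite _) hsub)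
  have hsub3 : ((G₁ ⊓ G₃ : Subgroup G) : Set G) * ((G₂ ⊓ G₃ : Subgroup G) : Set G)
      ⊆ ((K ⊓ G₃ : Subgroup G) : Set G) := by
    rintro x ⟨a, ha, b, hb, rfl⟩
    simp only [Subgroup.mem_inf, SetLike.mem_coe] at ha hb ⊢
    exact ⟨Set.mul_mem_mul ha.1 hb.1, mul_mem ha.2 hb.2⟩
  have hsub4 : ((G₁ ⊓ G₄ : Subgroup G) : Set G) * ((G₂ ⊓ G₄ : Subgroup G) : Set G)
      ⊆ ((K ⊓ G₄ : Subgroup G) : Set G) := by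
    rintro x ⟨a, ha, b, hb, rfl⟩
    simp only [Subgroup.mem_inf, SetLike.mem_coe] at ha hb ⊢
    exact ⟨Set.mul_mem_mul ha.1 hb.1, mul_mem ha.2 hb.2⟩
  have hsubK : ((K ⊓ G₃ : Subgroup G) : Set G) * ((K ⊓ G₄ : Subgroup G) : Set G)
      ⊆ (K : Set G) := by
    rintro x ⟨a, ha, b, hb, rfl⟩
    simp only [Subgroup.mem_inf, SetLike.mem_coe] at ha hb
    exact mul_mem ha.1 hb.1
  have e3 : (G₁ ⊓ G₃) ⊓ (G₂ ⊓ G₃) = G₁ ⊓ G₂ ⊓ G₃ := by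
    ext x; simp only [Subgroup.mem_inf]; tauto
  have e4 : (G₁ ⊓ G₄) ⊓ (G₂ ⊓ G₄) = G₁ ⊓ G₂ ⊓ G₄ := by
    ext x; simp only [Subgroup.mem_inf]; tauto
  have F1 : s * u ≤ m * p := by
    have := key _ _ _ hsub3
    rwa [e3] at this
  have F2 : t * v ≤ n * q := by
    have := key _ _ _ hsub4
    rwa [e4] at this
  have F3 : m * n ≤ k * d := by
    have h1 := key _ _ _ hsubK
    have h2 : Nat.card ((K ⊓ G₃) ⊓ (K ⊓ G₄) : Subgroup G) ≤ d :=
      Subgroup.card_le_of_le (inf_le_inf inf_le_right inf_le_right)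
    calc m * n ≤ k * Nat.card ((K ⊓ G₃) ⊓ (K ⊓ G₄) : Subgroup G) := h1
      _ ≤ k * d := Nat.mul_le_mul_left _ h2
  calc r * s * t * u * v = r * ((s * u) * (t * v)) := by ring
    _ ≤ r * ((m * p) * (n * q)) := Nat.mul_le_mul_left _ (Nat.mul_le_mul F1 F2)
    _ = (m * n) * (r * p * q) := by ring
    _ ≤ (k * d) * (r * p * q) := Nat.mul_le_mul_right _ F3
    _ = (k * r) * (d * p * q) := by ring
    _ = (a1 * a2) * (d * p * q) := by rw [F4]
    _ = a1 * a2 * d * p * q := by ring
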